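/- Let μ be a finite positive Radon Borel measure on K. Then μ is minimal if and only if for every continuous function f : K → ℝ that is constant on all fibres of the quotient map q (i.e. f(ζ) = f(ω) whenever g(ζ) = g(ω) for all g ∈ G), one has ∫ f dμ = inf { ∫ g dμ : g ∈ G, f ≤ g pointwise on K }. -/

import Mathlib

open MeasureTheory Set TopologicalSpace
open scoped ENNReal NNReal Pointwise
set_option linter.unusedSectionVars false

section RMK
variable {X : Type*} [TopologicalSpace X] [CompactSpace X] [T2Space X]

theorem contIntegrable [MeasurableSpace X] [OpensMeasurableSpace X] (ν : Measure X)
    [IsFiniteMeasure ν] {f : X → ℝ} (hf : Continuous f) : Integrable f ν := by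
  have h : IntegrableOn f Set.univ ν :=
    hf.continuousOn.integrableOn_compact' isCompact_univ MeasurableSet.univ
  simpa [integrableOn_univ] using h

variable (Λ : C(X,ℝ) →ₗ[ℝ] ℝ)

theorem lam_mono (hΛ : ∀ φ : C(X,ℝ), 0 ≤ φ → 0 ≤ Λ φ) {φ ψ : C(X,ℝ)} (h : ∀ x, φ x ≤ ψ x) :
    Λ φ ≤ Λ ψ := by
  have h0 : (0:C(X,ℝ)) ≤ ψ - φ := by
    rw [ContinuousMap.le_def]; intro x; simpa using h x
  have := hΛ _ h0
  rw [map_sub] at this; linarith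

/-- competitors for the content of `C` -/
def rset (C : Set X) : Set C(X,ℝ) := {g | (∀ x, 0 ≤ g x) ∧ ∀ x ∈ C, 1 ≤ g x}

theorem one_mem_rset (C : Set X) : (1 : C(X,ℝ)) ∈ rset C :=
  ⟨fun x => by simp, fun x _ => by simp⟩

/-- the Riesz content of a set -/
noncomputable def rcont (C : Set X) : ℝ := sInf (Λ '' rset C)

variable (hΛ : ∀ φ : C(X,ℝ), 0 ≤ φ → 0 ≤ Λ φ)
include hΛ

theorem rset_bddBelow (C : Set X) : BddBelow (Λ '' rset C) := by
  refine ⟨0, ?_⟩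
  rintro r ⟨g, hg, rfl⟩
  exact hΛ g (by rw [ContinuousMap.le_def]; simpa using hg.1)

theorem rcont_nonneg (C : Set X) : 0 ≤ rcont Λ C := by
  refine le_csInf ⟨Λ 1, 1, one_mem_rset C, rfl⟩ ?_
  rintro r ⟨g, hg, rfl⟩
  exact hΛ g (by rw [ContinuousMap.le_def]; simpa using hg.1)

theorem rcont_le {C : Set X} {g : C(X,ℝ)} (hg : g ∈ rset C) : rcont Λ C ≤ Λ g :=
  csInf_le (rset_bddBelow Λ hΛ C) ⟨g, hg, rfl⟩

theorem le_rcont {C : Set X} {a : ℝ} (h : ∀ g ∈ rset C, a ≤ Λ g) : a ≤ rcont Λ C := by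
  refine le_csInf ⟨Λ 1, 1, one_mem_rset C, rfl⟩ ?_
  rintro r ⟨g, hg, rfl⟩; exact h g hg

theorem rcont_mono {C₁ C₂ : Set X} (h : C₁ ⊆ C₂) : rcont Λ C₁ ≤ rcont Λ C₂ := by
  exact le_rcont Λ hΛ fun g hg => rcont_le Λ hΛ ⟨hg.1, fun x hx => hg.2 x (h hx)⟩

theorem rcont_subadd (C₁ C₂ : Set X) :
    rcont Λ (C₁ ∪ C₂) ≤ rcont Λ C₁ + rcont Λ C₂ := by
  refine le_of_forall_pos_le_add fun ε hε => ?_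
  obtain ⟨r₁, ⟨g₁, hg₁, rfl⟩, hr₁⟩ :=
    exists_lt_of_csInf_lt (⟨Λ 1, 1, one_mem_rset C₁, rfl⟩ : (Λ '' rset C₁).Nonempty)
      (lt_add_of_pos_right (rcont Λ C₁) (half_pos hε))
  obtain ⟨r₂, ⟨g₂, hg₂, rfl⟩, hr₂⟩ :=
    exists_lt_of_csInf_lt (⟨Λ 1, 1, one_mem_rset C₂, rfl⟩ : (Λ '' rset C₂).Nonempty)
      (lt_add_of_pos_right (rcont Λ C₂) (half_pos hε))
  have hmem : g₁ + g₂ ∈ rset (C₁ ∪ C₂) := by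
    constructor
    · intro x; have := hg₁.1 x; have := hg₂.1 x; simp only [ContinuousMap.add_apply]; linarith
    · rintro x (hx | hx)
      · have := hg₁.2 x hx; have := hg₂.1 x; simp only [ContinuousMap.add_apply]; linarith
      · have := hg₂.2 x hx; have := hg₁.1 x; simp only [ContinuousMap.add_apply]; linarith
  have := rcont_le Λ hΛ hmem
  rw [map_add] at this
  linarith

theorem rcont_add {C₁ C₂ : Set X} (hC₁ : IsCompact C₁) (hC₂ : IsCompact C₂)
    (hd : Disjoint C₁ C₂) :
    rcont Λ (C₁ ∪ C₂) = rcont Λ C₁ + rcont Λ C₂ := by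
  refine le_antisymm (rcont_subadd Λ hΛ C₁ C₂) ?_
  obtain ⟨u, hu0, hu1, hu01⟩ :=
    exists_continuous_zero_one_of_isCompact hC₁ hC₂.isClosed hd
  refine le_rcont Λ hΛ fun g hg => ?_
  have h1 : g * (1 - u) ∈ rset C₁ := by
    constructor
    · intro x
      have := (hu01 x).2; have := hg.1 x
      simp only [ContinuousMap.mul_apply, ContinuousMap.sub_apply, ContinuousMap.one_apply]
      nlinarith
    · intro x hx
      have h0 : u x = 0 := hu0 hx
      have := hg.2 x (Or.inl hx)
      simp only [ContinuousMap.mul_apply, ContinuousMap.sub_apply, ContinuousMap.one_apply, h0]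
      linarith
  have h2 : g * u ∈ rset C₂ := by
    constructor
    · intro x
      have := (hu01 x).1; have := hg.1 x
      simp only [ContinuousMap.mul_apply]; nlinarith
    · intro x hx
      have h0 : u x = 1 := hu1 hx
      have := hg.2 x (Or.inr hx)
      simp only [ContinuousMap.mul_apply, h0]; linarith
  have e : Λ (g * (1 - u)) + Λ (g * u) = Λ g := by
    rw [← map_add]; congr 1; ring
  have i1 := rcont_le Λ hΛ h1
  have i2 := rcont_le Λ hΛ h2
  linarith

/-- The content built from a positive linear functional on `C(X, ℝ)`. -/
noncomputable def rieszContentR : Content X where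
  toFun C := ⟨rcont Λ C, rcont_nonneg Λ hΛ C⟩
  mono' K₁ K₂ h := by exact_mod_cast rcont_mono Λ hΛ h
  sup_disjoint' K₁ K₂ hd h₁ h₂ := by
    ext
    push_cast
    exact rcont_add Λ hΛ K₁.2 K₂.2 hd
  sup_le' K₁ K₂ := by exact_mod_cast rcont_subadd Λ hΛ (K₁ : Set X) (K₂ : Set X)

theorem rieszContent_coe (K : Compacts X) :
    (rieszContentR Λ hΛ K : ℝ≥0∞) = ENNReal.ofReal (rcont Λ K) :=
  (ENNReal.ofReal_eq_coe_nnreal _).symm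


section Meas
variable [MeasurableSpace X] [BorelSpace X]

/-- The Riesz measure of a positive functional. -/
noncomputable def rieszMeasureR : Measure X := (rieszContentR Λ hΛ).measure

theorem rieszMeasure_univ_le : rieszMeasureR Λ hΛ univ ≤ ENNReal.ofReal (Λ 1) := by
  rw [rieszMeasureR, Content.measure_apply _ MeasurableSet.univ,
    (rieszContentR Λ hΛ).outerMeasure_of_isOpen univ isOpen_univ]
  refine le_trans (Content.innerContent_le _ _ ⟨univ, isCompact_univ⟩ subset_rfl) ?_
  rw [rieszContent_coe]
  exact ENNReal.ofReal_le_ofReal (rcont_le Λ hΛ (one_mem_rset _))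

theorem rieszMeasure_finite : IsFiniteMeasure (rieszMeasureR Λ hΛ) := by
  constructor
  exact lt_of_le_of_lt (rieszMeasure_univ_le Λ hΛ) ENNReal.ofReal_lt_top

theorem le_rieszMeasure_open {U : Set X} (hU : IsOpen U) {h : C(X,ℝ)} (h0 : ∀ x, 0 ≤ h x)
    (h1 : ∀ x, h x ≤ 1) (hsupp : tsupport ⇑h ⊆ U) :
    ENNReal.ofReal (Λ h) ≤ rieszMeasureR Λ hΛ U := by
  rw [rieszMeasureR, Content.measure_apply _ hU.measurableSet,
    (rieszContentR Λ hΛ).outerMeasure_of_isOpen U hU]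
  refine le_trans ?_ (Content.le_innerContent _ ⟨tsupport ⇑h, (isClosed_tsupport _).isCompact⟩
    ⟨U, hU⟩ hsupp)
  rw [rieszContent_coe]
  refine ENNReal.ofReal_le_ofReal ?_
  refine le_rcont Λ hΛ fun g hg => ?_
  refine lam_mono Λ hΛ fun x => ?_
  by_cases hx : x ∈ tsupport ⇑h
  · exact le_trans (h1 x) (hg.2 x hx)
  · rw [image_eq_zero_of_notMem_tsupport hx]
    exact hg.1 x

theorem rieszMeasure_innerRegular : (rieszMeasureR Λ hΛ).InnerRegular := by
  haveI := rieszMeasure_finite Λ hΛ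
  haveI : (rieszMeasureR Λ hΛ).Regular := by rw [rieszMeasureR]; infer_instance
  constructor
  intro s hs r hr
  obtain ⟨F, hFs, hFc, hrF⟩ :=
    MeasureTheory.Measure.WeaklyRegular.innerRegular_measurable (μ := rieszMeasureR Λ hΛ)
      ⟨hs, measure_ne_top _ s⟩ r hr
  exact ⟨F, hFs, hFc.isCompact, hrF⟩


theorem lam_le_integral_aux (φ : C(X,ℝ)) (hφ : ∀ x, 0 ≤ φ x) {ε : ℝ} (hε : 0 < ε) :
    Λ φ ≤ ∫ x, φ x ∂(rieszMeasureR Λ hΛ) +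
      (2 * ((rieszMeasureR Λ hΛ) univ).toReal + 1) * ε := by
  set ν := rieszMeasureR Λ hΛ with hν
  haveI := rieszMeasure_finite Λ hΛ
  set T : ℝ := (ν univ).toReal with hT
  set n : ℕ := ⌈‖φ‖ / ε⌉₊ + 1 with hn
  haveI : Nonempty (Fin n) := ⟨⟨0, Nat.succ_pos _⟩⟩
  set E : Fin n → Set X := fun i => ⇑φ ⁻¹' Ioc ((i.1:ℝ)*ε - ε) ((i.1:ℝ)*ε) with hE
  have hEmeas : ∀ i, MeasurableSet (E i) := fun i =>
    φ.continuous.measurable measurableSet_Ioc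
  have hEdisj : Pairwise (Function.onFun Disjoint E) := by
    have key : ∀ i j : Fin n, i.1 < j.1 → Disjoint (E i) (E j) := by
      intro i j hij
      rw [Set.disjoint_left]
      rintro x ⟨-, hxi2⟩ ⟨hxj1, -⟩
      have hcast : (i.1:ℝ) + 1 ≤ (j.1:ℝ) := by exact_mod_cast hij
      nlinarith
    intro i j hij
    rcases lt_or_gt_of_ne (fun h => hij (Fin.val_injective h)) with h | h
    · exact key i j h
    · exact (key j i h).symm
  have hEunion : (⋃ i, E i) = univ := by
    rw [eq_univ_iff_forall]
    intro x
    rw [mem_iUnion]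
    have hub : ⌈φ x / ε⌉₊ ≤ ⌈‖φ‖ / ε⌉₊ := by
      refine Nat.ceil_mono ?_
      gcongr
      exact le_trans (le_abs_self _) (φ.norm_coe_le_norm x)
    refine ⟨⟨⌈φ x / ε⌉₊, by omega⟩, ?_, ?_⟩
    · rcases Nat.eq_zero_or_pos ⌈φ x / ε⌉₊ with h0 | hpos
      · simp only [h0]
        have := hφ x
        push_cast
        linarith
      · have h1 : (⌈φ x / ε⌉₊ - 1 : ℕ) < ⌈φ x / ε⌉₊ := by omega
        have h2 : ((⌈φ x / ε⌉₊ - 1 : ℕ) : ℝ) < φ x / ε := Nat.lt_ceil.mp h1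
        have h3 : ((⌈φ x / ε⌉₊ - 1 : ℕ) : ℝ) = (⌈φ x / ε⌉₊ : ℝ) - 1 := by
          push_cast [hpos]; ring
        rw [h3] at h2
        have h4 : ((⌈φ x / ε⌉₊ : ℝ) - 1) * ε < φ x := (lt_div_iff₀ hε).mp h2
        simp only []
        nlinarith
    · have h2 : φ x / ε ≤ (⌈φ x / ε⌉₊ : ℝ) := Nat.le_ceil _
      simp only []
      calc φ x = (φ x / ε) * ε := by field_simp
      _ ≤ (⌈φ x / ε⌉₊ : ℝ) * ε := by gcongr
  -- the constant B and δ
  set B : ℝ := ∑ i : Fin n, ((i.1:ℝ)*ε + ε) with hB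
  have hBpos : 0 < B := by
    refine Finset.sum_pos (fun i _ => ?_) Finset.univ_nonempty
    positivity
  set δ : ℝ := ε / B with hδdef
  have hδ : 0 < δ := div_pos hε hBpos
  have hδB : δ * B = ε := div_mul_cancel₀ ε hBpos.ne'
  -- open approximations
  have hV : ∀ i : Fin n, ∃ V, E i ⊆ V ∧ IsOpen V ∧ ν V < ν (E i) + ENNReal.ofReal δ := by
    intro i
    haveI : ν.OuterRegular := by rw [hν, rieszMeasureR]; exact Content.outerRegular _
    exact (E i).exists_isOpen_lt_add (measure_ne_top ν _) (ENNReal.ofReal_pos.2 hδ).ne'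
  choose V hVsub hVopen hVlt using hV
  set U : Fin n → Set X := fun i => V i ∩ ⇑φ ⁻¹' Iio ((i.1:ℝ)*ε + ε) with hU
  have hUopen : ∀ i, IsOpen (U i) := fun i =>
    (hVopen i).inter (isOpen_Iio.preimage φ.continuous)
  have hEU : ∀ i, E i ⊆ U i := fun i =>
    subset_inter (hVsub i) (fun x hx => lt_of_le_of_lt hx.2 (lt_add_of_pos_right _ hε))
  have hUcover : univ ⊆ ⋃ i, U i := by
    rw [← hEunion]
    exact iUnion_mono hEU
  have hνU : ∀ i, ν (U i) ≤ ν (E i) + ENNReal.ofReal δ := fun i =>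
    le_trans (measure_mono inter_subset_left) (hVlt i).le
  -- partition of unity
  obtain ⟨f, hf⟩ := PartitionOfUnity.exists_isSubordinate isClosed_univ U hUopen hUcover
  have hsum1 : ∀ x, ∑ i, f i x = 1 := fun x => by
    rw [← finsum_eq_sum_of_fintype]
    exact f.sum_eq_one (mem_univ x)
  have hφsum : φ = ∑ i, φ * f i := by
    ext x
    rw [ContinuousMap.sum_apply]
    simp only [ContinuousMap.mul_apply]
    rw [← Finset.mul_sum, hsum1 x, mul_one]
  set c : Fin n → ℝ := fun i => (i.1:ℝ)*ε + ε with hc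
  have hcnn : ∀ i, 0 ≤ c i := by intro i; simp only [hc]; positivity
  set m : Fin n → ℝ := fun i => (ν (E i)).toReal with hm
  have hmnn : ∀ i, 0 ≤ m i := fun i => ENNReal.toReal_nonneg
  have key5 : ∀ i, 0 ≤ Λ (f i) := fun i =>
    hΛ _ (by rw [ContinuousMap.le_def]; intro x; simpa using f.nonneg i x)
  have key3 : ∀ i, Λ (φ * f i) ≤ c i * Λ (f i) := by
    intro i
    have hsm : Λ (c i • f i) = c i * Λ (f i) := by rw [_root_.map_smul]; rfl
    rw [← hsm]
    refine lam_mono Λ hΛ fun x => ?_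
    simp only [ContinuousMap.mul_apply, ContinuousMap.smul_apply, smul_eq_mul]
    rcases eq_or_ne (f i x) 0 with h0 | h0
    · simp [h0]
    · have hx : x ∈ U i := hf i (subset_closure (by simpa using h0))
      have : φ x < c i := hx.2
      exact mul_le_mul_of_nonneg_right this.le (f.nonneg i x)
  have key1 : ∀ i, Λ (f i) ≤ (ν (U i)).toReal := by
    intro i
    have h := le_rieszMeasure_open Λ hΛ (hUopen i) (f.nonneg i) (f.le_one i) (hf i)
    have h2 := ENNReal.toReal_mono (measure_ne_top ν _) h
    rwa [ENNReal.toReal_ofReal (key5 i)] at h2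
  have key4 : ∀ i, (ν (U i)).toReal ≤ m i + δ := by
    intro i
    have h2 := ENNReal.toReal_mono (by finiteness) (hνU i)
    rwa [ENNReal.toReal_add (measure_ne_top ν _) ENNReal.ofReal_ne_top,
      ENNReal.toReal_ofReal hδ.le] at h2
  have sumT : ∑ i, m i = T := by
    have h := measure_iUnion hEdisj hEmeas (μ := ν)
    rw [hEunion] at h
    rw [hT, h, tsum_fintype, ENNReal.toReal_sum (fun i _ => measure_ne_top ν _)]
  have hint : Integrable ⇑φ ν := contIntegrable ν φ.continuous
  have intlower : ∑ i, ((i.1:ℝ)*ε - ε) * m i ≤ ∫ x, φ x ∂ν := by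
    have hsplit : ∫ x, φ x ∂ν = ∑ i, ∫ x in E i, φ x ∂ν := by
      have h1 : ∫ x in ⋃ i ∈ Finset.univ, E i, φ x ∂ν = ∑ i, ∫ x in E i, φ x ∂ν :=
        integral_biUnion_finset Finset.univ (fun i _ => hEmeas i)
          (fun i _ j _ hij => hEdisj hij) (fun i _ => hint.integrableOn)
      rw [← h1]
      simp only [Finset.mem_univ, iUnion_true, hEunion]
      exact setIntegral_univ.symm
    rw [hsplit]
    refine Finset.sum_le_sum fun i _ => ?_
    have := setIntegral_ge_of_const_le (hEmeas i) (measure_ne_top ν _)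
      (fun x hx => hx.1.le) hint.integrableOn
    rw [smul_eq_mul, mul_comm] at this
    exact this
  -- final chain
  calc Λ φ = ∑ i, Λ (φ * f i) := by rw [← map_sum]; exact congrArg Λ hφsum
  _ ≤ ∑ i, c i * (m i + δ) := by
    refine Finset.sum_le_sum fun i _ => ?_
    refine le_trans (key3 i) ?_
    exact mul_le_mul_of_nonneg_left (le_trans (key1 i) (key4 i)) (hcnn i)
  _ = ∑ i, ((i.1:ℝ)*ε - ε) * m i + 2*ε * (∑ i, m i) + δ * B := by
    rw [hB, Finset.mul_sum, Finset.mul_sum, ← Finset.sum_add_distrib, ← Finset.sum_add_distrib]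
    refine Finset.sum_congr rfl fun i _ => ?_
    simp only [hc]
    ring
  _ ≤ ∫ x, φ x ∂ν + 2*ε*T + ε := by
    rw [sumT, hδB]
    gcongr
  _ = ∫ x, φ x ∂ν + (2*T + 1)*ε := by ring

theorem lam_le_integral (φ : C(X,ℝ)) : Λ φ ≤ ∫ x, φ x ∂(rieszMeasureR Λ hΛ) := by
  set ν := rieszMeasureR Λ hΛ with hν
  haveI := rieszMeasure_finite Λ hΛ
  set T : ℝ := (ν univ).toReal with hT
  have hTnn : 0 ≤ T := ENNReal.toReal_nonneg
  have nonneg_case : ∀ ψ : C(X,ℝ), (∀ x, 0 ≤ ψ x) → Λ ψ ≤ ∫ x, ψ x ∂ν := by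
    intro ψ hψ
    refine le_of_forall_pos_le_add fun ε' hε' => ?_
    have h2T : (0:ℝ) < 2*T + 1 := by linarith
    have := lam_le_integral_aux Λ hΛ ψ hψ (div_pos hε' h2T)
    rw [mul_div_cancel₀ _ h2T.ne'] at this
    exact this
  -- Λ 1 = T
  have hone : Λ 1 = T := by
    refine le_antisymm ?_ ?_
    · have := nonneg_case 1 (fun x => by simp)
      simp [integral_const, smul_eq_mul] at this
      exact this
    · have h := ENNReal.toReal_mono ENNReal.ofReal_ne_top (rieszMeasure_univ_le Λ hΛ)
      rwa [ENNReal.toReal_ofReal (hΛ 1 (by rw [ContinuousMap.le_def]; intro x; simp))] at h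
  -- general case
  have hint : Integrable ⇑φ ν := contIntegrable ν φ.continuous
  set ψ : C(X,ℝ) := φ + ‖φ‖ • 1 with hψdef
  have hψnn : ∀ x, 0 ≤ ψ x := by
    intro x
    simp only [hψdef, ContinuousMap.add_apply, ContinuousMap.smul_apply, ContinuousMap.one_apply,
      smul_eq_mul, mul_one]
    have h1 : |φ x| ≤ ‖φ‖ := φ.norm_coe_le_norm x
    have := neg_abs_le (φ x)
    linarith
  have h1 := nonneg_case ψ hψnn
  have h2 : Λ ψ = Λ φ + ‖φ‖ * Λ 1 := by rw [hψdef, map_add, _root_.map_smul, smul_eq_mul]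
  have h3 : ∫ x, ψ x ∂ν = ∫ x, φ x ∂ν + ‖φ‖ * T := by
    have : ∫ x, ψ x ∂ν = ∫ x, (φ x + ‖φ‖) ∂ν := by
      refine integral_congr_ae (Filter.Eventually.of_forall fun x => ?_)
      simp [hψdef]
    rw [this, integral_add hint (integrable_const _), integral_const, smul_eq_mul, mul_comm]
    rfl
  rw [h2, hone] at h1
  rw [h3] at h1
  linarith

theorem integral_rieszMeasure (φ : C(X,ℝ)) : ∫ x, φ x ∂(rieszMeasureR Λ hΛ) = Λ φ := by
  haveI := rieszMeasure_finite Λ hΛ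
  refine le_antisymm ?_ (lam_le_integral Λ hΛ φ)
  have h := lam_le_integral Λ hΛ (-φ)
  rw [map_neg] at h
  have hint : Integrable ⇑φ (rieszMeasureR Λ hΛ) := contIntegrable _ φ.continuous
  have : ∫ x, (-φ) x ∂(rieszMeasureR Λ hΛ) = - ∫ x, φ x ∂(rieszMeasureR Λ hΛ) := by
    rw [← integral_neg]
    exact integral_congr_ae (Filter.Eventually.of_forall fun x => by simp)
  rw [this] at h
  linarith

end Meas
end RMK

section SW
open scoped Topology

theorem mem_closure_of_lattice_interp {Y : Type*} [TopologicalSpace Y] [CompactSpace Y]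
    (L : Set C(Y, ℝ)) (nA : L.Nonempty)
    (inf_mem : ∀ f ∈ L, ∀ g ∈ L, f ⊓ g ∈ L)
    (sup_mem : ∀ f ∈ L, ∀ g ∈ L, f ⊔ g ∈ L)
    (f : C(Y, ℝ)) (sep : ∀ x y : Y, ∃ g ∈ L, g x = f x ∧ g y = f y) :
    f ∈ closure L := by
  refine
    Filter.Frequently.mem_closure
      ((Filter.HasBasis.frequently_iff Metric.nhds_basis_ball).mpr fun ε pos => ?_)
  simp only [exists_prop, Metric.mem_ball]
  by_cases nX : Nonempty Y
  swap
  · exact ⟨nA.some, (ContinuousMap.dist_lt_iff pos).mpr fun x => False.elim (nX ⟨x⟩), nA.choose_spec⟩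
  choose g hg w₁ w₂ using sep
  let U : Y → Y → Set Y := fun x y => {z | f z - ε < g x y z}
  have U_nhd_y : ∀ x y, U x y ∈ 𝓝 y := by
    intro x y
    refine IsOpen.mem_nhds ?_ ?_
    · apply isOpen_lt <;> continuity
    · rw [Set.mem_setOf_eq, w₂]
      exact sub_lt_self _ pos
  let ys : Y → Finset Y := fun x => (CompactSpace.elim_nhds_subcover (U x) (U_nhd_y x)).choose
  let ys_w : ∀ x, ⋃ y ∈ ys x, U x y = ⊤ := fun x =>
    (CompactSpace.elim_nhds_subcover (U x) (U_nhd_y x)).choose_spec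
  have ys_nonempty : ∀ x, (ys x).Nonempty := fun x =>
    Set.nonempty_of_union_eq_top_of_nonempty _ _ nX (ys_w x)
  let h : Y → L := fun x =>
    ⟨(ys x).sup' (ys_nonempty x) fun y => (g x y : C(Y, ℝ)),
      Finset.sup'_mem _ sup_mem _ _ _ fun y _ => hg x y⟩
  have lt_h : ∀ x z, f z - ε < (h x : Y → ℝ) z := by
    intro x z
    obtain ⟨y, ym, zm⟩ := Set.exists_set_mem_of_union_eq_top _ _ (ys_w x) z
    dsimp [h]
    simp only [Subtype.coe_mk, ContinuousMap.coe_sup', Finset.sup'_apply, Finset.lt_sup'_iff]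
    exact ⟨y, ym, zm⟩
  have h_eq : ∀ x, (h x : Y → ℝ) x = f x := by intro x; simp [h, w₁]
  let W : Y → Set Y := fun x => {z | (h x : Y → ℝ) z < f z + ε}
  have W_nhd : ∀ x, W x ∈ 𝓝 x := by
    intro x
    refine IsOpen.mem_nhds ?_ ?_
    · apply isOpen_lt <;> fun_prop
    · dsimp only [W, Set.mem_setOf_eq]
      rw [Set.mem_setOf_eq, h_eq]
      exact lt_add_of_pos_right _ pos
  let xs : Finset Y := (CompactSpace.elim_nhds_subcover W W_nhd).choose
  let xs_w : ⋃ x ∈ xs, W x = ⊤ := (CompactSpace.elim_nhds_subcover W W_nhd).choose_spec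
  have xs_nonempty : xs.Nonempty := Set.nonempty_of_union_eq_top_of_nonempty _ _ nX xs_w
  let k : (L : Type _) :=
    ⟨xs.inf' xs_nonempty fun x => (h x : C(Y, ℝ)),
      Finset.inf'_mem _ inf_mem _ _ _ fun x _ => (h x).2⟩
  refine ⟨k.1, ?_, k.2⟩
  rw [ContinuousMap.dist_lt_iff pos]
  intro z
  rw [show ∀ a b ε : ℝ, dist a b < ε ↔ a < b + ε ∧ b - ε < a by
        intros; simp only [← Metric.mem_ball, Real.ball_eq_Ioo, Set.mem_Ioo, and_comm]]
  fconstructor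
  · dsimp [k]
    simp only [Finset.inf'_lt_iff, ContinuousMap.inf'_apply]
    exact Set.exists_set_mem_of_union_eq_top _ _ xs_w z
  · dsimp [k]
    simp only [Finset.lt_inf'_iff, ContinuousMap.inf'_apply]
    rintro x -
    apply lt_h

end SW

section Main


/-- `Wt M` is the set `W = {(x,y) ∈ M × M : x ≠ y}`, a topological subspace of `M × M`. -/
abbrev Wt (M : Type*) [MetricSpace M] := {p : M × M // p.1 ≠ p.2}

/-- `g : W → ℝ` satisfies the G-inequality. -/
def GIneq {M : Type*} [MetricSpace M] (g : Wt M → ℝ) : Prop :=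
  ∀ (x u y : M) (hxu : x ≠ u) (huy : u ≠ y) (hxy : x ≠ y),
    dist x y * g ⟨(x, y), hxy⟩ ≤ dist x u * g ⟨(x, u), hxu⟩ + dist u y * g ⟨(u, y), huy⟩

/-- The cone `G` of continuous functions on `K = βW` satisfying the G-inequality
on points of `W`. -/
def GSet (M : Type*) [MetricSpace M] : Set (StoneCech (Wt M) → ℝ) :=
  {g | Continuous g ∧ GIneq fun p => g (stoneCechUnit p)}

/-- The Choquet-like quasi-order `μ ≼ ν`. -/
def Preceq {M : Type*} [MetricSpace M] [MeasurableSpace (StoneCech (Wt M))]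
    (μ ν : Measure (StoneCech (Wt M))) : Prop :=
  ∀ g ∈ GSet M, ∫ ζ, g ζ ∂μ ≤ ∫ ζ, g ζ ∂ν

/-- `μ` is `≼`-minimal among finite positive Radon Borel measures. -/
def IsMinimal {M : Type*} [MetricSpace M] [MeasurableSpace (StoneCech (Wt M))]
    (μ : Measure (StoneCech (Wt M))) : Prop :=
  ∀ ν : Measure (StoneCech (Wt M)),
    IsFiniteMeasure ν → ν.InnerRegular → Preceq ν μ → Preceq μ ν

/-- The equivalence relation `ζ ∼ ω` iff `g ζ = g ω` for all `g ∈ G`. -/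
def gSetoid (M : Type*) [MetricSpace M] : Setoid (StoneCech (Wt M)) where
  r ζ ω := ∀ g ∈ GSet M, g ζ = g ω
  iseqv := ⟨fun _ _ _ => rfl, fun h g hg => (h g hg).symm,
    fun h1 h2 g hg => (h1 g hg).trans (h2 g hg)⟩

/-- The quotient map `q : K → K/∼`. -/
def gq (M : Type*) [MetricSpace M] :
    StoneCech (Wt M) → Quotient (gSetoid M) := Quotient.mk _


variable {M : Type*} [MetricSpace M]

theorem gs_const {c : ℝ} (hc : 0 ≤ c) : (fun _ : StoneCech (Wt M) => c) ∈ GSet M := by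
  refine ⟨continuous_const, fun x u y hxu huy hxy => ?_⟩
  have := dist_triangle x u y
  nlinarith [dist_nonneg (x := x) (y := u), dist_nonneg (x := u) (y := y)]

theorem gs_add {g₁ g₂ : StoneCech (Wt M) → ℝ} (h₁ : g₁ ∈ GSet M) (h₂ : g₂ ∈ GSet M) :
    (g₁ + g₂) ∈ GSet M := by
  refine ⟨h₁.1.add h₂.1, fun x u y hxu huy hxy => ?_⟩
  have a := h₁.2 x u y hxu huy hxy
  have b := h₂.2 x u y hxu huy hxy
  simp only [Pi.add_apply]
  nlinarith
  
theorem gs_smul {c : ℝ} (hc : 0 ≤ c) {g : StoneCech (Wt M) → ℝ} (h : g ∈ GSet M) :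
    (c • g) ∈ GSet M := by
  refine ⟨h.1.const_smul c, fun x u y hxu huy hxy => ?_⟩
  have a := h.2 x u y hxu huy hxy
  simp only [Pi.smul_apply, smul_eq_mul]
  nlinarith

theorem gs_sup {g₁ g₂ : StoneCech (Wt M) → ℝ} (h₁ : g₁ ∈ GSet M) (h₂ : g₂ ∈ GSet M) :
    (g₁ ⊔ g₂) ∈ GSet M := by
  refine ⟨h₁.1.max h₂.1, fun x u y hxu huy hxy => ?_⟩
  have a := h₁.2 x u y hxu huy hxy
  have b := h₂.2 x u y hxu huy hxy
  dsimp only at a b ⊢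
  simp only [Pi.sup_apply]
  rcases max_cases (g₁ (stoneCechUnit ⟨(x,y),hxy⟩)) (g₂ (stoneCechUnit ⟨(x,y),hxy⟩)) with
    ⟨he,-⟩|⟨he,-⟩ <;> rw [he]
  · refine le_trans a ?_
    gcongr
    exacts [le_max_left _ _, le_max_left _ _]
  · refine le_trans b ?_
    gcongr
    exacts [le_max_right _ _, le_max_right _ _]

theorem gs_zero : (0 : StoneCech (Wt M) → ℝ) ∈ GSet M := by
  exact gs_const (M := M) (le_refl (0:ℝ))

section P
variable [MeasurableSpace (StoneCech (Wt M))] [BorelSpace (StoneCech (Wt M))]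
variable (μ : Measure (StoneCech (Wt M))) [IsFiniteMeasure μ]

/-- the defining set for the upper envelope functional -/
def Sset (φ : C(StoneCech (Wt M), ℝ)) : Set ℝ :=
  {r | ∃ g ∈ GSet M, (∀ ζ, φ ζ ≤ g ζ) ∧ r = ∫ ζ, g ζ ∂μ}

/-- the upper envelope functional -/
noncomputable def pEnv (φ : C(StoneCech (Wt M), ℝ)) : ℝ := sInf (Sset μ φ)

theorem gs_integrable {g : StoneCech (Wt M) → ℝ} (hg : g ∈ GSet M) : Integrable g μ :=
  contIntegrable μ hg.1

theorem Sset_nonempty (φ : C(StoneCech (Wt M), ℝ)) : (Sset μ φ).Nonempty := by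
  refine ⟨∫ ζ, (fun _ => ‖φ‖) ζ ∂μ, (fun _ => ‖φ‖), gs_const (norm_nonneg φ), fun ζ => ?_, rfl⟩
  exact le_trans (le_abs_self _) (φ.norm_coe_le_norm ζ)

theorem Sset_bddBelow (φ : C(StoneCech (Wt M), ℝ)) : BddBelow (Sset μ φ) := by
  refine ⟨∫ ζ, φ ζ ∂μ, ?_⟩
  rintro r ⟨g, hg, hle, rfl⟩
  exact integral_mono (contIntegrable μ φ.continuous) (gs_integrable μ hg) hle

theorem le_pEnv (φ : C(StoneCech (Wt M), ℝ)) : ∫ ζ, φ ζ ∂μ ≤ pEnv μ φ := by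
  refine le_csInf (Sset_nonempty μ φ) ?_
  rintro r ⟨g, hg, hle, rfl⟩
  exact integral_mono (contIntegrable μ φ.continuous) (gs_integrable μ hg) hle

theorem pEnv_le {φ : C(StoneCech (Wt M), ℝ)} {g : StoneCech (Wt M) → ℝ} (hg : g ∈ GSet M)
    (hle : ∀ ζ, φ ζ ≤ g ζ) : pEnv μ φ ≤ ∫ ζ, g ζ ∂μ :=
  csInf_le (Sset_bddBelow μ φ) ⟨g, hg, hle, rfl⟩

theorem pEnv_add (φ ψ : C(StoneCech (Wt M), ℝ)) :
    pEnv μ (φ + ψ) ≤ pEnv μ φ + pEnv μ ψ := by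
  refine le_of_forall_pos_le_add fun ε hε => ?_
  obtain ⟨r₁, ⟨g₁, hg₁, hle₁, rfl⟩, hr₁⟩ :=
    exists_lt_of_csInf_lt (Sset_nonempty μ φ) (lt_add_of_pos_right (pEnv μ φ) (half_pos hε))
  obtain ⟨r₂, ⟨g₂, hg₂, hle₂, rfl⟩, hr₂⟩ :=
    exists_lt_of_csInf_lt (Sset_nonempty μ ψ) (lt_add_of_pos_right (pEnv μ ψ) (half_pos hε))
  have hmem : pEnv μ (φ + ψ) ≤ ∫ ζ, (g₁ + g₂) ζ ∂μ := by
    refine pEnv_le μ (gs_add hg₁ hg₂) fun ζ => ?_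
    have := hle₁ ζ; have := hle₂ ζ
    simp only [ContinuousMap.add_apply, Pi.add_apply]
    linarith
  simp only [Pi.add_apply] at hmem
  rw [integral_add (gs_integrable μ hg₁) (gs_integrable μ hg₂)] at hmem
  linarith

theorem pEnv_smul {c : ℝ} (hc : 0 < c) (φ : C(StoneCech (Wt M), ℝ)) :
    pEnv μ (c • φ) = c * pEnv μ φ := by
  have hset : Sset μ (c • φ) = c • (Sset μ φ) := by
    ext r
    constructor
    · rintro ⟨g, hg, hle, rfl⟩
      refine ⟨∫ ζ, (c⁻¹ • g) ζ ∂μ, ⟨c⁻¹ • g, gs_smul (inv_nonneg.2 hc.le) hg, fun ζ => ?_, rfl⟩, ?_⟩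
      · have := hle ζ
        simp only [ContinuousMap.smul_apply, smul_eq_mul] at this
        simp only [Pi.smul_apply, smul_eq_mul]
        rw [le_inv_mul_iff₀ hc]
        linarith
      · simp only [smul_eq_mul]
        have : ∀ ζ, (c⁻¹ • g) ζ = c⁻¹ * g ζ := fun ζ => rfl
        rw [integral_congr_ae (Filter.Eventually.of_forall this), integral_const_mul]
        field_simp
    · rintro ⟨s, ⟨g, hg, hle, rfl⟩, rfl⟩
      refine ⟨c • g, gs_smul hc.le hg, fun ζ => ?_, ?_⟩
      · have := hle ζ
        simp only [ContinuousMap.smul_apply, Pi.smul_apply, smul_eq_mul]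
        exact mul_le_mul_of_nonneg_left this hc.le
      · simp only [smul_eq_mul]
        have : ∀ ζ, (c • g) ζ = c * g ζ := fun ζ => rfl
        rw [integral_congr_ae (Filter.Eventually.of_forall this), integral_const_mul]
  rw [pEnv, hset, Real.sInf_smul_of_nonneg hc.le, smul_eq_mul, pEnv]

end P

/-- differences of elements of the cone `G`, as continuous maps -/
def LL (M : Type*) [MetricSpace M] : Set C(StoneCech (Wt M), ℝ) :=
  {h | ∃ g₁ g₂ : C(StoneCech (Wt M), ℝ), ⇑g₁ ∈ GSet M ∧ ⇑g₂ ∈ GSet M ∧ h = g₁ - g₂}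

theorem LL_zero : (0 : C(StoneCech (Wt M), ℝ)) ∈ LL M :=
  ⟨0, 0, by simpa using gs_zero (M := M), by simpa using gs_zero (M := M), by simp⟩

theorem LL_const (c : ℝ) : (ContinuousMap.const _ c : C(StoneCech (Wt M), ℝ)) ∈ LL M := by
  rcases le_or_gt 0 c with hc | hc
  · exact ⟨ContinuousMap.const _ c, 0, by exact gs_const hc,
      by simpa using gs_zero (M := M), by simp⟩
  · refine ⟨0, ContinuousMap.const _ (-c), by simpa using gs_zero (M := M),
      by exact gs_const (by linarith : (0:ℝ) ≤ -c), ?_⟩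
    ext x; simp

theorem LL_smul (a : ℝ) {g : C(StoneCech (Wt M), ℝ)} (hg : ⇑g ∈ GSet M) : a • g ∈ LL M := by
  rcases le_or_gt 0 a with ha | ha
  · exact ⟨a • g, 0, by simpa using gs_smul ha hg, by simpa using gs_zero (M := M), by simp⟩
  · refine ⟨0, (-a) • g, by simpa using gs_zero (M := M),
      by simpa using gs_smul (by linarith : (0:ℝ) ≤ -a) hg, ?_⟩
    ext x; simp

theorem LL_add {h k : C(StoneCech (Wt M), ℝ)} (hh : h ∈ LL M) (hk : k ∈ LL M) :
    h + k ∈ LL M := by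
  obtain ⟨a, b, ha, hb, rfl⟩ := hh
  obtain ⟨c, d, hc, hd, rfl⟩ := hk
  refine ⟨a + c, b + d, by simpa using gs_add ha hc, by simpa using gs_add hb hd, ?_⟩
  ext x; simp; ring

theorem LL_sup {h k : C(StoneCech (Wt M), ℝ)} (hh : h ∈ LL M) (hk : k ∈ LL M) :
    h ⊔ k ∈ LL M := by
  obtain ⟨a, b, ha, hb, rfl⟩ := hh
  obtain ⟨c, d, hc, hd, rfl⟩ := hk
  refine ⟨(a + d) ⊔ (c + b), b + d, ?_, by simpa using gs_add hb hd, ?_⟩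
  · rw [ContinuousMap.coe_sup]
    exact gs_sup (by simpa using gs_add ha hd) (by simpa using gs_add hc hb)
  · ext x
    simp only [ContinuousMap.sup_apply, ContinuousMap.sub_apply, ContinuousMap.add_apply]
    rcases le_total (a x - b x) (c x - d x) with h | h
    · rw [max_eq_right h, max_eq_right (by linarith)]; ring
    · rw [max_eq_left h, max_eq_left (by linarith)]; ring

theorem LL_inf {h k : C(StoneCech (Wt M), ℝ)} (hh : h ∈ LL M) (hk : k ∈ LL M) :
    h ⊓ k ∈ LL M := by
  obtain ⟨a, b, ha, hb, rfl⟩ := hh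
  obtain ⟨c, d, hc, hd, rfl⟩ := hk
  refine ⟨a + c, (b + c) ⊔ (d + a), by simpa using gs_add ha hc, ?_, ?_⟩
  · rw [ContinuousMap.coe_sup]
    exact gs_sup (by simpa using gs_add hb hc) (by simpa using gs_add hd ha)
  · ext x
    simp only [ContinuousMap.inf_apply, ContinuousMap.sub_apply, ContinuousMap.add_apply,
      ContinuousMap.sup_apply]
    rcases le_total (a x - b x) (c x - d x) with h | h
    · rw [min_eq_left h, max_eq_left (by linarith)]; ring
    · rw [min_eq_right h, max_eq_right (by linarith)]; ring

theorem mem_closure_LL (f0 : C(StoneCech (Wt M), ℝ))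
    (hconst : ∀ ζ ω : StoneCech (Wt M), (∀ g ∈ GSet M, g ζ = g ω) → f0 ζ = f0 ω) :
    f0 ∈ closure (LL M) := by
  refine mem_closure_of_lattice_interp (LL M) ⟨0, LL_zero⟩ (fun h hh k hk => LL_inf hh hk)
    (fun h hh k hk => LL_sup hh hk) f0 fun ζ ω => ?_
  by_cases hsep : ∀ g ∈ GSet M, g ζ = g ω
  · refine ⟨ContinuousMap.const _ (f0 ζ), LL_const _, ?_, ?_⟩
    · simp
    · simp [hconst ζ ω hsep]
  · push_neg at hsep
    obtain ⟨g, hgG, hne⟩ := hsep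
    set gm : C(StoneCech (Wt M), ℝ) := ⟨g, hgG.1⟩ with hgm
    have hne' : gm ζ - gm ω ≠ 0 := sub_ne_zero.2 hne
    set a : ℝ := (f0 ζ - f0 ω) / (gm ζ - gm ω) with hadef
    refine ⟨a • gm + ContinuousMap.const _ (f0 ζ - a * gm ζ),
      LL_add (LL_smul a (by simpa [hgm] using hgG)) (LL_const _), ?_, ?_⟩
    · simp only [ContinuousMap.add_apply, ContinuousMap.smul_apply, ContinuousMap.const_apply,
        smul_eq_mul]
      ring
    · simp only [ContinuousMap.add_apply, ContinuousMap.smul_apply, ContinuousMap.const_apply,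
        smul_eq_mul, hadef]
      field_simp
      ring

section Transfer
variable [MeasurableSpace (StoneCech (Wt M))] [BorelSpace (StoneCech (Wt M))]

theorem integral_eq_of_eq_on_G (μ ν : Measure (StoneCech (Wt M))) [IsFiniteMeasure μ]
    [IsFiniteMeasure ν] (heq : ∀ g ∈ GSet M, ∫ ζ, g ζ ∂μ = ∫ ζ, g ζ ∂ν)
    {f0 : C(StoneCech (Wt M), ℝ)} (hcl : f0 ∈ closure (LL M)) :
    ∫ ζ, f0 ζ ∂μ = ∫ ζ, f0 ζ ∂ν := by
  set d : ℝ := ∫ ζ, f0 ζ ∂μ - ∫ ζ, f0 ζ ∂ν with hd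
  set C : ℝ := (μ univ).toReal + (ν univ).toReal with hC
  have hCnn : 0 ≤ C := by positivity
  have key : ∀ ε : ℝ, 0 < ε → |d| ≤ ε * C := by
    intro ε hε
    obtain ⟨h, hhLL, hdist⟩ := Metric.mem_closure_iff.1 hcl ε hε
    have hint : ∫ ζ, h ζ ∂μ = ∫ ζ, h ζ ∂ν := by
      obtain ⟨g₁, g₂, hg₁, hg₂, rfl⟩ := hhLL
      simp only [ContinuousMap.sub_apply]
      rw [integral_sub (contIntegrable μ g₁.continuous) (contIntegrable μ g₂.continuous),
        integral_sub (contIntegrable ν g₁.continuous) (contIntegrable ν g₂.continuous),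
        heq _ hg₁, heq _ hg₂]
    have hb : ∀ x, ‖f0 x - h x‖ ≤ ε := by
      intro x
      rw [Real.norm_eq_abs, ← Real.dist_eq]
      exact le_trans (ContinuousMap.dist_apply_le_dist x) hdist.le
    have e1 : ∫ ζ, (f0 ζ - h ζ) ∂μ = ∫ ζ, f0 ζ ∂μ - ∫ ζ, h ζ ∂μ :=
      integral_sub (contIntegrable μ f0.continuous) (contIntegrable μ h.continuous)
    have e2 : ∫ ζ, (f0 ζ - h ζ) ∂ν = ∫ ζ, f0 ζ ∂ν - ∫ ζ, h ζ ∂ν :=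
      integral_sub (contIntegrable ν f0.continuous) (contIntegrable ν h.continuous)
    have h1 : ‖∫ ζ, (f0 ζ - h ζ) ∂μ‖ ≤ ε * (μ univ).toReal :=
      norm_integral_le_of_norm_le_const (Filter.Eventually.of_forall hb)
    have h2 : ‖∫ ζ, (f0 ζ - h ζ) ∂ν‖ ≤ ε * (ν univ).toReal :=
      norm_integral_le_of_norm_le_const (Filter.Eventually.of_forall hb)
    have hdd : d = (∫ ζ, (f0 ζ - h ζ) ∂μ) - ∫ ζ, (f0 ζ - h ζ) ∂ν := by
      rw [e1, e2, hd, hint]; ring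
    rw [hdd]
    calc |(∫ ζ, (f0 ζ - h ζ) ∂μ) - ∫ ζ, (f0 ζ - h ζ) ∂ν|
        ≤ |∫ ζ, (f0 ζ - h ζ) ∂μ| + |∫ ζ, (f0 ζ - h ζ) ∂ν| := abs_sub _ _
    _ ≤ ε * (μ univ).toReal + ε * (ν univ).toReal := by
        rw [Real.norm_eq_abs] at h1 h2; linarith
    _ = ε * C := by rw [hC]; ring
  have habs : |d| ≤ 0 := by
    by_contra hcon
    push_neg at hcon
    have := key (|d| / (2 * (C + 1))) (by positivity)
    have hfrac : |d| / (2 * (C + 1)) * C < |d| := by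
      rw [div_mul_eq_mul_div, div_lt_iff₀ (by positivity)]
      nlinarith
    linarith
  have : d = 0 := abs_eq_zero.1 (le_antisymm habs (abs_nonneg d))
  rw [hd] at this
  linarith

end Transfer
end Main

theorem stmt15 {M : Type*} [MetricSpace M]
    [MeasurableSpace (StoneCech (Wt M))] [BorelSpace (StoneCech (Wt M))]
    (h3 : ∃ x y z : M, x ≠ y ∧ x ≠ z ∧ y ≠ z)
    (μ : Measure (StoneCech (Wt M))) [IsFiniteMeasure μ] [μ.InnerRegular] :
    IsMinimal μ ↔
      ∀ f : StoneCech (Wt M) → ℝ, Continuous f →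
        (∀ ζ ω : StoneCech (Wt M), (∀ g ∈ GSet M, g ζ = g ω) → f ζ = f ω) →
        ∫ ζ, f ζ ∂μ =
          sInf {r : ℝ | ∃ g ∈ GSet M, (∀ ζ, f ζ ≤ g ζ) ∧ r = ∫ ζ, g ζ ∂μ} := by
  constructor
  · -- minimality implies the envelope formula
    intro hmin f hfc hconst
    set f0 : C(StoneCech (Wt M), ℝ) := ⟨f, hfc⟩ with hf0
    have hSeq : {r : ℝ | ∃ g ∈ GSet M, (∀ ζ, f ζ ≤ g ζ) ∧ r = ∫ ζ, g ζ ∂μ} = Sset μ f0 := rfl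
    rw [hSeq]
    have hle : ∫ ζ, f ζ ∂μ ≤ sInf (Sset μ f0) := le_pEnv μ f0
    refine le_antisymm hle ?_
    by_contra hcon
    push_neg at hcon
    have hcon' : ∫ ζ, f ζ ∂μ < pEnv μ f0 := hcon
    have hf0ne : f0 ≠ 0 := by
      intro h0
      have h1 : pEnv μ f0 ≤ ∫ ζ, (0 : StoneCech (Wt M) → ℝ) ζ ∂μ :=
        pEnv_le μ gs_zero (fun ζ => by rw [h0]; simp)
      have h2 : ∫ ζ, (0 : StoneCech (Wt M) → ℝ) ζ ∂μ = 0 := by simp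
      have h3 : ∫ ζ, f ζ ∂μ = 0 := by
        have : f = (0 : StoneCech (Wt M) → ℝ) := by
          funext ζ
          have : f0 ζ = (0 : C(StoneCech (Wt M), ℝ)) ζ := by rw [h0]
          exact this.trans (by simp)
        rw [this]; simp
      rw [h2] at h1
      rw [h3] at hcon'
      linarith
    have hp0 : (0:ℝ) ≤ pEnv μ (0 : C(StoneCech (Wt M), ℝ)) := by
      have := le_pEnv μ (0 : C(StoneCech (Wt M), ℝ))
      simpa using this
    have hbound : ∀ x : (LinearPMap.mkSpanSingleton (K := ℝ) (σ := RingHom.id ℝ) f0 (pEnv μ f0) hf0ne).domain,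
        (LinearPMap.mkSpanSingleton (K := ℝ) (σ := RingHom.id ℝ) f0 (pEnv μ f0) hf0ne) x ≤ pEnv μ x := by
      rintro ⟨x, hx⟩
      obtain ⟨c, rfl⟩ := Submodule.mem_span_singleton.mp hx
      rw [LinearPMap.mkSpanSingleton'_apply, RingHom.id_apply]
      rcases lt_trichotomy c 0 with hc | hc | hc
      · have h1 := pEnv_add μ (c • f0) ((-c) • f0)
        have h2 : (c • f0) + ((-c) • f0) = (0 : C(StoneCech (Wt M), ℝ)) := by
          rw [← add_smul]; simp
        have h3 : pEnv μ ((-c) • f0) = (-c) * pEnv μ f0 := pEnv_smul μ (by linarith) f0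
        rw [h2, h3] at h1
        simp only [smul_eq_mul]
        linarith
      · subst hc
        simp only [zero_smul, smul_eq_mul, zero_mul]
        exact hp0
      · rw [pEnv_smul μ hc, smul_eq_mul]
    obtain ⟨L, hL1, hL2⟩ := exists_extension_of_le_sublinear
      (LinearPMap.mkSpanSingleton (K := ℝ) (σ := RingHom.id ℝ) f0 (pEnv μ f0) hf0ne) (pEnv μ)
      (fun c hc φ => pEnv_smul μ hc φ) (pEnv_add μ) hbound
    have hLf0 : L f0 = pEnv μ f0 := by
      have h := hL1 ⟨f0, Submodule.mem_span_singleton_self f0⟩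
      rwa [LinearPMap.mkSpanSingleton_apply] at h
    have hpos : ∀ φ : C(StoneCech (Wt M), ℝ), 0 ≤ φ → 0 ≤ L φ := by
      intro φ hφ
      have h1 := hL2 (-φ)
      have h2 : pEnv μ (-φ) ≤ 0 := by
        have h3 := pEnv_le μ (φ := -φ) gs_zero (fun ζ => by
          rw [ContinuousMap.le_def] at hφ
          have := hφ ζ
          simp only [ContinuousMap.neg_apply, Pi.zero_apply]
          simpa using this)
        simpa using h3
      rw [map_neg] at h1
      linarith
    set ν := rieszMeasureR L hpos with hν
    haveI hνfin : IsFiniteMeasure ν := rieszMeasure_finite L hpos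
    have hνreg : ν.InnerRegular := rieszMeasure_innerRegular L hpos
    have hνμ : Preceq ν μ := by
      intro g hg
      calc ∫ ζ, g ζ ∂ν = L ⟨g, hg.1⟩ := integral_rieszMeasure L hpos ⟨g, hg.1⟩
      _ ≤ pEnv μ ⟨g, hg.1⟩ := hL2 _
      _ ≤ ∫ ζ, g ζ ∂μ := pEnv_le μ hg (fun ζ => le_refl _)
    have hμν : Preceq μ ν := hmin ν hνfin hνreg hνμ
    have heqG : ∀ g ∈ GSet M, ∫ ζ, g ζ ∂μ = ∫ ζ, g ζ ∂ν := fun g hg =>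
      le_antisymm (hμν g hg) (hνμ g hg)
    have hcl : f0 ∈ closure (LL M) := mem_closure_LL f0 hconst
    have hint : ∫ ζ, f0 ζ ∂μ = ∫ ζ, f0 ζ ∂ν := integral_eq_of_eq_on_G μ ν heqG hcl
    have hfin2 : ∫ ζ, f0 ζ ∂ν = L f0 := integral_rieszMeasure L hpos f0
    rw [hfin2, hLf0] at hint
    have : ∫ ζ, f ζ ∂μ = pEnv μ f0 := hint
    linarith
  · -- converse
    intro hyp ν hνfin hνreg hνμ g hg
    have hfc : Continuous (fun ζ => -(g ζ)) := hg.1.neg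
    have hcst : ∀ ζ ω : StoneCech (Wt M), (∀ h ∈ GSet M, h ζ = h ω) →
        -(g ζ) = -(g ω) := fun ζ ω hall => by rw [hall g hg]
    have h := hyp _ hfc hcst
    have hnegμ : ∫ ζ, -(g ζ) ∂μ = - ∫ ζ, g ζ ∂μ := integral_neg _
    have hnegν : ∫ ζ, -(g ζ) ∂ν = - ∫ ζ, g ζ ∂ν := integral_neg _
    have hSne : {r : ℝ | ∃ h ∈ GSet M, (∀ ζ, -(g ζ) ≤ h ζ) ∧ r = ∫ ζ, h ζ ∂μ}.Nonempty := by
      set gm : C(StoneCech (Wt M), ℝ) := ⟨g, hg.1⟩ with hgm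
      refine ⟨∫ ζ, (fun _ => ‖gm‖) ζ ∂μ, (fun _ => ‖gm‖), gs_const (norm_nonneg gm), fun ζ => ?_, rfl⟩
      have h1 : |g ζ| ≤ ‖gm‖ := gm.norm_coe_le_norm ζ
      have := neg_abs_le (g ζ)
      linarith
    have hlb : - ∫ ζ, g ζ ∂ν ≤
        sInf {r : ℝ | ∃ h ∈ GSet M, (∀ ζ, -(g ζ) ≤ h ζ) ∧ r = ∫ ζ, h ζ ∂μ} := by
      refine le_csInf hSne ?_
      rintro r ⟨h', hh', hle', rfl⟩
      calc - ∫ ζ, g ζ ∂ν = ∫ ζ, -(g ζ) ∂ν := hnegν.symm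
      _ ≤ ∫ ζ, h' ζ ∂ν := integral_mono (contIntegrable ν hfc) (gs_integrable ν hh') hle'
      _ ≤ ∫ ζ, h' ζ ∂μ := hνμ h' hh'
    rw [← h] at hlb
    rw [hnegμ] at hlb
    linarith
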